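/- For every r ∈ ℝ, the per-region goodput G is twice differentiable at r and its second derivative equals G″(r) = 2·∫_φ^{φ'} H(γ, r) dγ + r·∫_φ^{φ'} H(γ, r)·n·(C(γ) − r)/V(γ) dγ. -/

import Mathlib

open MeasureTheory intervalIntegral Real Filter Topology

/-- Gaussian Q-function: Q(t) = (1/√(2π)) ∫_t^∞ exp(−u²/2) du. -/
noncomputable def Qfun (t : ℝ) : ℝ :=
  (Real.sqrt (2 * Real.pi))⁻¹ * ∫ u in Set.Ioi t, Real.exp (-u ^ 2 / 2)

/-- Capacity C(γ) = log(1 + P γ) (natural log). -/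
noncomputable def Cap (P γ : ℝ) : ℝ := Real.log (1 + P * γ)

/-- Channel dispersion V(γ) = 1 − 1/(1 + P γ)². -/
noncomputable def Vdisp (P γ : ℝ) : ℝ := 1 - 1 / (1 + P * γ) ^ 2

/-- Codeword error probability Ω(γ, r) = Q((C(γ) − r)·√(n/V(γ))). -/
noncomputable def Omega (n P γ r : ℝ) : ℝ :=
  Qfun ((Cap P γ - r) * Real.sqrt (n / Vdisp P γ))

/-- H(γ, r) = −(1/√(2π))·exp(−n(C(γ)−r)²/(2V(γ)))·f(γ)·√(n/V(γ)). -/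
noncomputable def Hfun (n P : ℝ) (f : ℝ → ℝ) (γ r : ℝ) : ℝ :=
  -(Real.sqrt (2 * Real.pi))⁻¹ * Real.exp (-(n * (Cap P γ - r) ^ 2) / (2 * Vdisp P γ)) *
    f γ * Real.sqrt (n / Vdisp P γ)

lemma gauss_integrable : Integrable (fun u : ℝ => Real.exp (-u ^ 2 / 2)) := by
  have h := integrable_exp_neg_mul_sq (by norm_num : (0:ℝ) < 1/2)
  convert h using 2 with u
  ring_nf

lemma Qfun_aux (t : ℝ) :
    HasDerivAt (fun t : ℝ => ∫ u in Set.Ioi t, Real.exp (-u ^ 2 / 2))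
      (-Real.exp (-t ^ 2 / 2)) t := by
  have hint := gauss_integrable
  have hiff : ∀ t : ℝ, (∫ u in Set.Ioi t, Real.exp (-u ^ 2 / 2)) =
      (∫ u, Real.exp (-u ^ 2 / 2)) - (∫ u in Set.Iic 0, Real.exp (-u ^ 2 / 2))
        - ∫ u in (0:ℝ)..t, Real.exp (-u ^ 2 / 2) := by
    intro t
    have h1 : (∫ u in Set.Iic t, Real.exp (-u ^ 2 / 2)) +
        (∫ u in Set.Ioi t, Real.exp (-u ^ 2 / 2)) = ∫ u, Real.exp (-u ^ 2 / 2) :=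
      integral_Iic_add_Ioi hint.integrableOn hint.integrableOn
    have h2 : (∫ u in Set.Iic t, Real.exp (-u ^ 2 / 2)) -
        (∫ u in Set.Iic 0, Real.exp (-u ^ 2 / 2)) =
        ∫ u in (0:ℝ)..t, Real.exp (-u ^ 2 / 2) :=
      integral_Iic_sub_Iic hint.integrableOn hint.integrableOn
    linarith
  simp only [hiff]
  have hft : HasDerivAt (fun t : ℝ => ∫ u in (0:ℝ)..t, Real.exp (-u ^ 2 / 2))
      (Real.exp (-t ^ 2 / 2)) t :=
    intervalIntegral.integral_hasDerivAt_right hint.intervalIntegrable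
      hint.aestronglyMeasurable.stronglyMeasurableAtFilter
      (Real.continuous_exp.comp (by continuity)).continuousAt
  simpa using (hft.const_sub ((∫ u, Real.exp (-u ^ 2 / 2)) - ∫ u in Set.Iic 0, Real.exp (-u ^ 2 / 2)))

lemma Qfun_hasDerivAt (t : ℝ) :
    HasDerivAt Qfun (-(Real.sqrt (2 * Real.pi))⁻¹ * Real.exp (-t ^ 2 / 2)) t := by
  have h := (Qfun_aux t).const_mul (Real.sqrt (2 * Real.pi))⁻¹
  have : Qfun = fun t => (Real.sqrt (2 * Real.pi))⁻¹ * ∫ u in Set.Ioi t, Real.exp (-u ^ 2 / 2) := rfl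
  rw [this]
  refine h.congr_deriv ?_
  ring

lemma Qfun_continuous : Continuous Qfun :=
  continuous_iff_continuousAt.2 fun t => (Qfun_hasDerivAt t).continuousAt

lemma one_add_lt {P : ℝ} (hP : 0 < P) {γ : ℝ} (hγ : 0 < γ) : 1 < 1 + P * γ := by nlinarith

lemma Vdisp_pos {P : ℝ} (hP : 0 < P) {γ : ℝ} (hγ : 0 < γ) : 0 < Vdisp P γ := by
  have h1 : 1 < 1 + P * γ := one_add_lt hP hγ
  have h2 : (1:ℝ) < (1 + P * γ) ^ 2 := by nlinarith
  have : 1 / (1 + P * γ) ^ 2 < 1 := by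
    rw [div_lt_one (by positivity)]; exact h2
  simp only [Vdisp]; linarith

/-- derivative of r ↦ Omega n P γ r -/
lemma Omega_hasDerivAt (n P : ℝ) (hn : 0 < n) (hP : 0 < P) {γ : ℝ} (hγ : 0 < γ) (r : ℝ) :
    HasDerivAt (fun r => Omega n P γ r)
      ((Real.sqrt (2 * Real.pi))⁻¹ * Real.exp (-(n * (Cap P γ - r) ^ 2) / (2 * Vdisp P γ)) *
        Real.sqrt (n / Vdisp P γ)) r := by
  have hV := Vdisp_pos hP hγ
  set s := Real.sqrt (n / Vdisp P γ) with hs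
  have hinner : HasDerivAt (fun r : ℝ => (Cap P γ - r) * s) (-s) r := by
    simpa using ((hasDerivAt_id r).const_sub (Cap P γ)).mul_const s
  have hQ := (Qfun_hasDerivAt ((Cap P γ - r) * s)).comp r hinner
  have hsq : s ^ 2 = n / Vdisp P γ := Real.sq_sqrt (by positivity)
  have hexp : -((Cap P γ - r) * s) ^ 2 / 2 = -(n * (Cap P γ - r) ^ 2) / (2 * Vdisp P γ) := by
    rw [mul_pow, hsq]
    field_simp
  have : HasDerivAt (fun r => Omega n P γ r)
      (-(Real.sqrt (2 * Real.pi))⁻¹ * Real.exp (-((Cap P γ - r) * s) ^ 2 / 2) * -s) r := hQ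
  rw [hexp] at this
  convert this using 1
  ring

lemma g_hasDerivAt (n P : ℝ) (hn : 0 < n) (hP : 0 < P) (f : ℝ → ℝ) {γ : ℝ} (hγ : 0 < γ)
    (r : ℝ) :
    HasDerivAt (fun r => f γ * (1 - Omega n P γ r)) (Hfun n P f γ r) r := by
  have h := ((Omega_hasDerivAt n P hn hP hγ r).const_sub 1).const_mul (f γ)
  refine h.congr_deriv ?_
  simp only [Hfun]
  ring

lemma H_hasDerivAt (n P : ℝ) (hn : 0 < n) (hP : 0 < P) (f : ℝ → ℝ) {γ : ℝ} (hγ : 0 < γ)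
    (r : ℝ) :
    HasDerivAt (fun r => Hfun n P f γ r)
      (Hfun n P f γ r * (n * (Cap P γ - r) / Vdisp P γ)) r := by
  have hV := Vdisp_pos hP hγ
  have h1 : HasDerivAt (fun r : ℝ => (Cap P γ - r) ^ 2) (2 * (Cap P γ - r) * (-1)) r := by
    simpa using (((hasDerivAt_id r).const_sub (Cap P γ)).fun_pow 2)
  have h2 : HasDerivAt (fun r : ℝ => -(n * (Cap P γ - r) ^ 2) / (2 * Vdisp P γ))
      (n * (Cap P γ - r) / Vdisp P γ) r := by
    have := (h1.const_mul n).fun_neg.div_const (2 * Vdisp P γ)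
    refine this.congr_deriv ?_
    field_simp
  have h3 := h2.exp
  have h4 := (h3.const_mul (-(Real.sqrt (2 * Real.pi))⁻¹)).mul_const
      (f γ * Real.sqrt (n / Vdisp P γ))
  have hfun : (fun r => Hfun n P f γ r) = fun r =>
      -(Real.sqrt (2 * Real.pi))⁻¹ * Real.exp (-(n * (Cap P γ - r) ^ 2) / (2 * Vdisp P γ)) *
        (f γ * Real.sqrt (n / Vdisp P γ)) := by
    funext r'; simp only [Hfun]; ring
  rw [show Hfun n P f γ r * (n * (Cap P γ - r) / Vdisp P γ) =
      -(Real.sqrt (2 * Real.pi))⁻¹ *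
        (Real.exp (-(n * (Cap P γ - r) ^ 2) / (2 * Vdisp P γ)) *
          (n * (Cap P γ - r) / Vdisp P γ)) * (f γ * Real.sqrt (n / Vdisp P γ)) by
    simp only [Hfun]; ring, hfun]
  exact h4

section Cont

variable {n P : ℝ} (hn : 0 < n) (hP : 0 < P) {f : ℝ → ℝ}

lemma contOn_Cap (hP : 0 < P) :
    ContinuousOn (fun p : ℝ × ℝ => Cap P p.1) (Set.Ioi 0 ×ˢ (Set.univ : Set ℝ)) := by
  apply ContinuousOn.log
  · exact (continuous_const.add (continuous_const.mul continuous_fst)).continuousOn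
  · rintro ⟨γ, r⟩ ⟨hγ, -⟩
    have := one_add_lt hP hγ
    dsimp only
    linarith

lemma contOn_Vdisp (hP : 0 < P) :
    ContinuousOn (fun p : ℝ × ℝ => Vdisp P p.1) (Set.Ioi 0 ×ˢ (Set.univ : Set ℝ)) := by
  apply continuousOn_const.sub
  apply continuousOn_const.div
  · exact ((continuous_const.add (continuous_const.mul continuous_fst)).pow 2).continuousOn
  · rintro ⟨γ, r⟩ ⟨hγ, -⟩
    have := one_add_lt hP hγ
    positivity

lemma contOn_sqrt (hP : 0 < P) :
    ContinuousOn (fun p : ℝ × ℝ => Real.sqrt (n / Vdisp P p.1))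
      (Set.Ioi 0 ×ˢ (Set.univ : Set ℝ)) :=
  Real.continuous_sqrt.comp_continuousOn (continuousOn_const.div (contOn_Vdisp hP)
    fun p hp => (Vdisp_pos hP hp.1).ne')

lemma contOn_exp (hP : 0 < P) :
    ContinuousOn (fun p : ℝ × ℝ =>
        Real.exp (-(n * (Cap P p.1 - p.2) ^ 2) / (2 * Vdisp P p.1)))
      (Set.Ioi 0 ×ˢ (Set.univ : Set ℝ)) := by
  apply Real.continuous_exp.comp_continuousOn
  apply ContinuousOn.div
  · exact (continuousOn_const.mul (((contOn_Cap hP).sub continuous_snd.continuousOn).pow 2)).neg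
  · exact continuousOn_const.mul (contOn_Vdisp hP)
  · rintro ⟨γ, r⟩ ⟨hγ, -⟩
    have := Vdisp_pos hP hγ
    positivity

lemma contOn_g (hP : 0 < P) (hf : Continuous f) :
    ContinuousOn (fun p : ℝ × ℝ => f p.1 * (1 - Omega n P p.1 p.2))
      (Set.Ioi 0 ×ˢ (Set.univ : Set ℝ)) := by
  apply (hf.comp continuous_fst).continuousOn.mul
  apply continuousOn_const.sub
  exact Qfun_continuous.comp_continuousOn
    (((contOn_Cap hP).sub continuous_snd.continuousOn).mul (contOn_sqrt hP))

lemma contOn_H (hP : 0 < P) (hf : Continuous f) :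
    ContinuousOn (fun p : ℝ × ℝ => Hfun n P f p.1 p.2)
      (Set.Ioi 0 ×ˢ (Set.univ : Set ℝ)) := by
  exact ((continuousOn_const.mul (contOn_exp hP)).mul
    (hf.comp continuous_fst).continuousOn).mul (contOn_sqrt hP)

lemma contOn_H2 (hP : 0 < P) (hf : Continuous f) :
    ContinuousOn (fun p : ℝ × ℝ =>
        Hfun n P f p.1 p.2 * (n * (Cap P p.1 - p.2) / Vdisp P p.1))
      (Set.Ioi 0 ×ˢ (Set.univ : Set ℝ)) := by
  apply (contOn_H hP hf).mul
  apply ContinuousOn.div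
  · exact continuousOn_const.mul ((contOn_Cap hP).sub continuous_snd.continuousOn)
  · exact contOn_Vdisp hP
  · exact fun p hp => (Vdisp_pos hP hp.1).ne'

end Cont

lemma hasDerivAt_param {φ φ' : ℝ} (hφ : 0 < φ) (hlt : φ < φ')
    (g g' : ℝ → ℝ → ℝ)
    (hg : ContinuousOn (fun p : ℝ × ℝ => g p.1 p.2) (Set.Ioi 0 ×ˢ (Set.univ : Set ℝ)))
    (hg' : ContinuousOn (fun p : ℝ × ℝ => g' p.1 p.2) (Set.Ioi 0 ×ˢ (Set.univ : Set ℝ)))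
    (hd : ∀ γ : ℝ, 0 < γ → ∀ r : ℝ, HasDerivAt (fun r => g γ r) (g' γ r) r)
    (r : ℝ) :
    HasDerivAt (fun r => ∫ γ in φ..φ', g γ r) (∫ γ in φ..φ', g' γ r) r := by
  have hIoc : Set.uIoc φ φ' = Set.Ioc φ φ' := Set.uIoc_of_le hlt.le
  have hIcc : Set.uIcc φ φ' = Set.Icc φ φ' := Set.uIcc_of_le hlt.le
  -- continuity of slices
  have hslice : ∀ (h : ℝ → ℝ → ℝ),
      ContinuousOn (fun p : ℝ × ℝ => h p.1 p.2) (Set.Ioi 0 ×ˢ (Set.univ : Set ℝ)) →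
      ∀ x : ℝ, ContinuousOn (fun γ => h γ x) (Set.Icc φ φ') := by
    intro h hh x
    have : ContinuousOn (fun γ : ℝ => h γ x) (Set.Ioi 0) := by
      have := hh.comp (Continuous.continuousOn (by continuity :
          Continuous fun γ : ℝ => ((γ, x) : ℝ × ℝ)))
        (fun γ hγ => by exact ⟨hγ, Set.mem_univ _⟩)
      exact this
    exact this.mono fun γ hγ => lt_of_lt_of_le hφ hγ.1
  -- compact bound for g'
  set K : Set (ℝ × ℝ) := Set.Icc φ φ' ×ˢ Set.Icc (r - 1) (r + 1) with hK
  have hKc : IsCompact K := isCompact_Icc.prod isCompact_Icc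
  have hKS : K ⊆ Set.Ioi 0 ×ˢ (Set.univ : Set ℝ) := fun p hp =>
    ⟨lt_of_lt_of_le hφ hp.1.1, Set.mem_univ _⟩
  obtain ⟨M, hM⟩ := hKc.exists_bound_of_continuousOn (hg'.mono hKS)
  have hmeas : ∀ (h : ℝ → ℝ → ℝ),
      ContinuousOn (fun p : ℝ × ℝ => h p.1 p.2) (Set.Ioi 0 ×ˢ (Set.univ : Set ℝ)) →
      ∀ x : ℝ, AEStronglyMeasurable (fun t => h t x) (volume.restrict (Set.uIoc φ φ')) := by
    intro h hh x
    rw [hIoc]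
    exact ((hslice h hh x).mono Set.Ioc_subset_Icc_self).aestronglyMeasurable measurableSet_Ioc
  have hintg : IntervalIntegrable (fun t => g t r) volume φ φ' := by
    apply ContinuousOn.intervalIntegrable
    rw [hIcc]; exact hslice g hg r
  have key := intervalIntegral.hasDerivAt_integral_of_dominated_loc_of_deriv_le
    (μ := volume) (F := fun x t => g t x) (F' := fun x t => g' t x) (a := φ) (b := φ')
    (bound := fun _ => M) (x₀ := r) (s := Metric.ball r 1) (Metric.ball_mem_nhds r one_pos)
    (Filter.Eventually.of_forall fun x => hmeas g hg x)
    hintg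
    (hmeas g' hg' r)
    (Filter.Eventually.of_forall fun t ht x hx => by
      rw [hIoc] at ht
      have hx' : x ∈ Set.Icc (r - 1) (r + 1) := by
        have := Metric.mem_ball.1 hx
        rw [Real.dist_eq, abs_lt] at this
        constructor <;> linarith [this.1, this.2]
      exact hM (t, x) ⟨Set.Ioc_subset_Icc_self ht, hx'⟩)
    intervalIntegrable_const
    (Filter.Eventually.of_forall fun t ht x hx => by
      rw [hIoc] at ht
      exact hd t (lt_trans hφ ht.1) x)
  exact key.2

theorem goodput_second_deriv (n P : ℝ) (hn : 0 < n) (hP : 0 < P)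
    (f : ℝ → ℝ) (hf : Continuous f) (hfpos : ∀ γ : ℝ, 0 < γ → 0 < f γ)
    (φ φ' : ℝ) (hφ : 0 < φ) (hφφ' : φ < φ') (r : ℝ) :
    DifferentiableAt ℝ (fun r : ℝ => r * ∫ γ in φ..φ', f γ * (1 - Omega n P γ r)) r ∧
    DifferentiableAt ℝ
      (deriv (fun r : ℝ => r * ∫ γ in φ..φ', f γ * (1 - Omega n P γ r))) r ∧
    deriv (deriv (fun r : ℝ => r * ∫ γ in φ..φ', f γ * (1 - Omega n P γ r))) r =
      2 * (∫ γ in φ..φ', Hfun n P f γ r) +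
        r * ∫ γ in φ..φ', Hfun n P f γ r * (n * (Cap P γ - r) / Vdisp P γ) := by
  -- first derivative of the inner integral
  have hI : ∀ r : ℝ, HasDerivAt (fun r => ∫ γ in φ..φ', f γ * (1 - Omega n P γ r))
      (∫ γ in φ..φ', Hfun n P f γ r) r := fun r =>
    hasDerivAt_param hφ hφφ' (fun γ r => f γ * (1 - Omega n P γ r)) (fun γ r => Hfun n P f γ r)
      (contOn_g hP hf) (contOn_H hP hf)
      (fun γ hγ r => g_hasDerivAt n P hn hP f hγ r) r
  have hJ : ∀ r : ℝ, HasDerivAt (fun r => ∫ γ in φ..φ', Hfun n P f γ r)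
      (∫ γ in φ..φ', Hfun n P f γ r * (n * (Cap P γ - r) / Vdisp P γ)) r := fun r =>
    hasDerivAt_param hφ hφφ' (fun γ r => Hfun n P f γ r)
      (fun γ r => Hfun n P f γ r * (n * (Cap P γ - r) / Vdisp P γ))
      (contOn_H hP hf) (contOn_H2 hP hf)
      (fun γ hγ r => H_hasDerivAt n P hn hP f hγ r) r
  have hG : ∀ r : ℝ, HasDerivAt (fun r : ℝ => r * ∫ γ in φ..φ', f γ * (1 - Omega n P γ r))
      ((∫ γ in φ..φ', f γ * (1 - Omega n P γ r)) + r * ∫ γ in φ..φ', Hfun n P f γ r) r := by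
    intro r
    have := (hasDerivAt_id r).fun_mul (hI r)
    simpa using this
  have hderivG : deriv (fun r : ℝ => r * ∫ γ in φ..φ', f γ * (1 - Omega n P γ r)) =
      fun r : ℝ => (∫ γ in φ..φ', f γ * (1 - Omega n P γ r)) +
        r * ∫ γ in φ..φ', Hfun n P f γ r := by
    funext r'
    exact (hG r').deriv
  have hsec : HasDerivAt (fun r : ℝ => (∫ γ in φ..φ', f γ * (1 - Omega n P γ r)) +
        r * ∫ γ in φ..φ', Hfun n P f γ r)
      (2 * (∫ γ in φ..φ', Hfun n P f γ r) +
        r * ∫ γ in φ..φ', Hfun n P f γ r * (n * (Cap P γ - r) / Vdisp P γ)) r := by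
    have := (hI r).fun_add ((hasDerivAt_id r).fun_mul (hJ r))
    simp only [id_eq, one_mul] at this
    refine this.congr_deriv ?_
    rw [two_mul, add_assoc]
  refine ⟨(hG r).differentiableAt, ?_, ?_⟩
  · rw [hderivG]; exact hsec.differentiableAt
  · rw [hderivG]; exact hsec.deriv
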